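/- The homomorphic rewrite system on the message algebra is convergent: every message m has exactly one normal form m↓, i.e., there is a unique message m↓ with m →* m↓ such that no rewrite step applies to m↓; moreover any two messages reachable from m by →* can be further rewritten to this common normal form. -/
import Mathlib


/-- Messages: the free term algebra generated by atoms under pairing and
encryption with atomic keys. -/
inductive Msg (A : Type) : Type
  | atom : A → Msg A
  | pair : Msg A → Msg A → Msg A
  | enc : Msg A → A → Msg A

/-- The homomorphic rewrite relation: smallest relation containing every
instance of `{m·m'}_k → {m}_k·{m'}_k` and closed under contexts. -/
inductive Rw {A : Type} : Msg A → Msg A → Prop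
  | homo (m m' : Msg A) (k : A) :
      Rw (.enc (.pair m m') k) (.pair (.enc m k) (.enc m' k))
  | pairL {m m' : Msg A} (n : Msg A) : Rw m m' → Rw (.pair m n) (.pair m' n)
  | pairR {m m' : Msg A} (n : Msg A) : Rw m m' → Rw (.pair n m) (.pair n m')
  | enc {m m' : Msg A} (k : A) : Rw m m' → Rw (.enc m k) (.enc m' k)

/-- A message is a normal form if no rewrite step applies to it. -/
def IsNormalForm {A : Type} (m : Msg A) : Prop := ∀ m' : Msg A, ¬ Rw m m'

def encNF {A : Type} : Msg A → A → Msg A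
  | .pair a b, k => .pair (encNF a k) (encNF b k)
  | .atom a, k => .enc (.atom a) k
  | .enc m k', k => .enc (.enc m k') k

def nf {A : Type} : Msg A → Msg A
  | .atom a => .atom a
  | .pair a b => .pair (nf a) (nf b)
  | .enc m k => encNF (nf m) k

open Relation

lemma rtg_pairL {A : Type} {m m' : Msg A} (n : Msg A)
    (h : ReflTransGen Rw m m') : ReflTransGen Rw (.pair m n) (.pair m' n) := by
  induction h with
  | refl => exact .refl
  | tail _ h ih => exact ih.tail (.pairL n h)

lemma rtg_pairR {A : Type} {m m' : Msg A} (n : Msg A)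
    (h : ReflTransGen Rw m m') : ReflTransGen Rw (.pair n m) (.pair n m') := by
  induction h with
  | refl => exact .refl
  | tail _ h ih => exact ih.tail (.pairR n h)

lemma rtg_enc {A : Type} {m m' : Msg A} (k : A)
    (h : ReflTransGen Rw m m') : ReflTransGen Rw (.enc m k) (.enc m' k) := by
  induction h with
  | refl => exact .refl
  | tail _ h ih => exact ih.tail (.enc k h)

lemma encNF_reaches {A : Type} (m : Msg A) (k : A) :
    ReflTransGen Rw (.enc m k) (encNF m k) := by
  induction m with
  | atom a => exact .refl
  | pair a b iha ihb =>
      refine (ReflTransGen.single (Rw.homo a b k)).trans ?_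
      exact ((rtg_pairL _ (iha)).trans (rtg_pairR _ (ihb)))
  | enc m k' ih => exact .refl

lemma nf_reaches {A : Type} (m : Msg A) : ReflTransGen Rw m (nf m) := by
  induction m with
  | atom a => exact .refl
  | pair a b iha ihb => exact (rtg_pairL _ iha).trans (rtg_pairR _ ihb)
  | enc m k ih => exact (rtg_enc k ih).trans (encNF_reaches (nf m) k)

lemma nf_pair {A : Type} {a b : Msg A} (ha : IsNormalForm a) (hb : IsNormalForm b) :
    IsNormalForm (.pair a b) := by
  intro x hx
  cases hx with
  | pairL n h => exact ha _ h
  | pairR n h => exact hb _ h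

lemma pair_nf {A : Type} {a b : Msg A} (h : IsNormalForm (.pair a b)) :
    IsNormalForm a ∧ IsNormalForm b :=
  ⟨fun x hx => h _ (.pairL b hx), fun x hx => h _ (.pairR a hx)⟩

lemma enc_nf {A : Type} {m : Msg A} {k : A} (h : IsNormalForm (.enc m k)) :
    IsNormalForm m := fun x hx => h _ (.enc k hx)

lemma encNF_normal {A : Type} {m : Msg A} (k : A) (hm : IsNormalForm m) :
    IsNormalForm (encNF m k) := by
  induction m with
  | atom a =>
      intro x hx
      cases hx with
      | enc k h => cases h
  | pair a b iha ihb =>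
      obtain ⟨ha, hb⟩ := pair_nf hm
      exact nf_pair (iha ha) (ihb hb)
  | enc m k' ih =>
      intro x hx
      cases hx with
      | enc k h => exact hm _ h

lemma nf_normal {A : Type} (m : Msg A) : IsNormalForm (nf m) := by
  induction m with
  | atom a => intro x hx; cases hx
  | pair a b iha ihb => exact nf_pair iha ihb
  | enc m k ih => exact encNF_normal k ih

lemma nf_fixed {A : Type} {m : Msg A} (h : IsNormalForm m) : nf m = m := by
  induction m with
  | atom a => rfl
  | pair a b iha ihb =>
      obtain ⟨ha, hb⟩ := pair_nf h
      simp [nf, iha ha, ihb hb]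
  | enc m k ih =>
      have hm := enc_nf h
      have : nf m = m := ih hm
      rw [nf, this]
      cases m with
      | atom a => rfl
      | pair a b => exact absurd (Rw.homo a b k) (h _)
      | enc m k' => rfl

lemma nf_rw {A : Type} {m m' : Msg A} (h : Rw m m') : nf m = nf m' := by
  induction h with
  | homo m m' k => rfl
  | pairL n h ih => simp [nf, ih]
  | pairR n h ih => simp [nf, ih]
  | enc k h ih => simp [nf, ih]

lemma nf_rtg {A : Type} {m m' : Msg A} (h : ReflTransGen Rw m m') : nf m = nf m' := by
  induction h with
  | refl => rfl
  | tail _ h ih => exact ih.trans (nf_rw h)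

/-- Convergence of the homomorphic rewrite system: every message has a unique
normal form, and any two messages reachable from it rewrite to this common
normal form. -/
theorem homomorphic_rewrite_convergent
    (A : Type) [Countable A] (m : Msg A) :
    ∃ n : Msg A,
      (Relation.ReflTransGen Rw m n ∧ IsNormalForm n) ∧
      (∀ n' : Msg A,
        Relation.ReflTransGen Rw m n' → IsNormalForm n' → n' = n) ∧
      (∀ m' : Msg A,
        Relation.ReflTransGen Rw m m' → Relation.ReflTransGen Rw m' n) := by
  refine ⟨nf m, ⟨nf_reaches m, nf_normal m⟩, ?_, ?_⟩
  · intro n' h hn'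
    have := nf_rtg h
    rw [nf_fixed hn'] at this
    exact this.symm
  · intro m' h
    have := nf_rtg h
    rw [this]
    exact nf_reaches m'
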